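/- For integers l ≥ 0, n ≥ 1, i ≥ 0, the integral ∫_{−1}^{1} C^{3/2}_l(z)(1+z)^n(1−z)^i dz equals 2^{n+i} i!(l+1)(l+2)/((n+1)_{i+1}) · ₃F₂(−l, l+3, i+1; 2, i+n+2; 1), where ₃F₂ is the (terminating) generalized hypergeometric sum ∑_{j=0}^l (−l)_j(l+3)_j(i+1)_j / ((2)_j(i+n+2)_j j!). -/

import Mathlib

/-- The Gegenbauer (ultraspherical) polynomial `C^{3/2}_l(x) = T¹_l(x)`, via the
standard explicit formula
`C^α_l(x) = ∑_{k=0}^{⌊l/2⌋} (-1)^k (α)_{l-k}/(k!(l-2k)!) (2x)^{l-2k}` with `α = 3/2`. -/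
noncomputable def gegenbauer32 (l : ℕ) (x : ℝ) : ℝ :=
  ∑ k ∈ Finset.range (l / 2 + 1),
    (-1 : ℝ)^k * (∏ t ∈ Finset.range (l - k), ((3:ℝ)/2 + t)) /
      ((Nat.factorial k : ℝ) * (Nat.factorial (l - 2*k) : ℝ)) * (2*x)^(l - 2*k)

open intervalIntegral in
lemma beta_int : ∀ (m n : ℕ), (∫ z in (-1:ℝ)..1, (1+z)^n * (1-z)^m)
    = 2^(n+m+1) * (Nat.factorial n) * (Nat.factorial m) / (Nat.factorial (n+m+1)) := by
  intro m
  induction m with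
  | zero =>
    intro n
    have h1 : (∫ z in (-1:ℝ)..1, (1+z)^n * (1-z)^0) = ∫ z in (-1:ℝ)..1, (1+z)^n := by
      simp
    have h2 : (∫ z in (-1:ℝ)..1, (1+z)^n) = ∫ z in (1+(-1:ℝ))..(1+1), z^n := by
      rw [← intervalIntegral.integral_comp_add_left (fun z => z^n) 1]
    rw [h1, h2, integral_pow]
    norm_num [Nat.factorial_succ]
    have hf : ((Nat.factorial n):ℝ) ≠ 0 := by positivity
    have hn : ((n:ℝ)+1) ≠ 0 := by positivity
    field_simp
  | succ m ih =>
    intro n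
    have hd1 : ∀ x : ℝ, HasDerivAt (fun z : ℝ => (1-z)^(m+1)) (-((m:ℝ)+1) * (1-x)^m) x := by
      intro x
      have h := ((hasDerivAt_id x).const_sub 1).pow (m+1)
      refine h.congr_deriv ?_
      simp
      ring
    have hd2 : ∀ x : ℝ, HasDerivAt (fun z : ℝ => (1+z)^(n+1)/((n:ℝ)+1)) ((1+x)^n) x := by
      intro x
      have h := (((hasDerivAt_id x).const_add 1).pow (n+1)).div_const ((n:ℝ)+1)
      refine h.congr_deriv ?_
      have hn : ((n:ℝ)+1) ≠ 0 := by positivity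
      push_cast [Nat.add_sub_cancel]
      field_simp
      rfl
    have key : (∫ z in (-1:ℝ)..1, (1-z)^(m+1) * (1+z)^n)
        = ((1-(1:ℝ))^(m+1)) * ((1+1)^(n+1)/((n:ℝ)+1)) - ((1-(-1:ℝ))^(m+1)) * ((1+(-1:ℝ))^(n+1)/((n:ℝ)+1))
          - ∫ z in (-1:ℝ)..1, (-((m:ℝ)+1) * (1-z)^m) * ((1+z)^(n+1)/((n:ℝ)+1)) := by
      exact integral_mul_deriv_eq_deriv_mul (fun x _ => hd1 x) (fun x _ => hd2 x)
        (by apply Continuous.intervalIntegrable; continuity)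
        (by apply Continuous.intervalIntegrable; continuity)
    have e1 : (∫ z in (-1:ℝ)..1, (1+z)^n * (1-z)^(m+1))
        = ∫ z in (-1:ℝ)..1, (1-z)^(m+1) * (1+z)^n := by
      congr 1; ext z; ring
    have e2 : (∫ z in (-1:ℝ)..1, (-((m:ℝ)+1) * (1-z)^m) * ((1+z)^(n+1)/((n:ℝ)+1)))
        = (-((m:ℝ)+1)/((n:ℝ)+1)) * ∫ z in (-1:ℝ)..1, (1+z)^(n+1) * (1-z)^m := by
      rw [← intervalIntegral.integral_const_mul]
      congr 1; ext z; ring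
    rw [e1, key, e2, ih (n+1)]
    have hn : ((n:ℝ)+1) ≠ 0 := by positivity
    have hf1 : ((Nat.factorial (n+1+m+1)):ℝ) ≠ 0 := by positivity
    have hf2 : ((Nat.factorial (n+(m+1)+1)):ℝ) ≠ 0 := by positivity
    have hee : n+1+m+1 = n+(m+1)+1 := by omega
    rw [hee] at *
    push_cast [Nat.factorial_succ]
    field_simp
    ring

noncomputable def Acoef (l j : ℕ) : ℝ :=
  (∏ s ∈ Finset.range j, (-(l:ℝ)+s)) * (∏ s ∈ Finset.range j, ((l:ℝ)+3+s)) /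
    ((∏ s ∈ Finset.range j, ((2:ℝ)+s)) * (Nat.factorial j : ℝ))

noncomputable def pochh (c : ℝ) (j : ℕ) : ℝ := ∏ s ∈ Finset.range j, (c+s)

lemma pochP2 (c : ℝ) (m : ℕ) : pochh c (m+2) = c * (c+1) * pochh (c+2) m := by
  unfold pochh
  rw [Finset.prod_range_succ', Finset.prod_range_succ']
  rw [Finset.prod_congr rfl (fun s _ => show c + ((s:ℕ)+1+1:ℕ) = c+2+s by push_cast; ring)]
  push_cast; ring

lemma pochP1 (c : ℝ) (m : ℕ) : pochh c (m+1) = c * pochh (c+1) m := by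
  unfold pochh
  rw [Finset.prod_range_succ']
  rw [Finset.prod_congr rfl (fun s _ => show c + ((s:ℕ)+1:ℕ) = c+1+s by push_cast; ring)]
  push_cast; ring

lemma pochP1' (c : ℝ) (m : ℕ) : pochh c (m+2) = c * pochh (c+1) (m+1) := pochP1 c (m+1)

lemma pochS2 (c : ℝ) (m : ℕ) : pochh c (m+2) = pochh c m * (c+m) * (c+m+1) := by
  unfold pochh
  rw [Finset.prod_range_succ, Finset.prod_range_succ]
  push_cast; ring

lemma pochS1 (c : ℝ) (m : ℕ) : pochh c (m+1) = pochh c m * (c+m) := by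
  unfold pochh
  rw [Finset.prod_range_succ]

lemma pochh_pos (m : ℕ) : 0 < pochh 2 m :=
  Finset.prod_pos (fun s _ => by positivity)

lemma coeffH (l j : ℕ) :
    ((l:ℝ)+2)*(((l:ℝ)+3)*((l:ℝ)+4)/2)*Acoef (l+2) j
      - (2*(l:ℝ)+5)*(((l:ℝ)+2)*((l:ℝ)+3)/2)*Acoef (l+1) j
      + 2*(2*(l:ℝ)+5)*(((l:ℝ)+2)*((l:ℝ)+3)/2)*(if 1 ≤ j then Acoef (l+1) (j-1) else 0)
      + ((l:ℝ)+3)*(((l:ℝ)+1)*((l:ℝ)+2)/2)*Acoef l j = 0 := by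
  match j with
  | 0 =>
    simp [Acoef]
    ring
  | 1 =>
    simp only [Acoef, Finset.prod_range_one, Finset.prod_range_zero]
    norm_num [Nat.factorial]
    ring
  | (m+2) =>
    simp only [Acoef, if_pos (by omega : 1 ≤ m+2), show m+2-1 = m+1 from rfl]
    push_cast
    rw [show (∏ x ∈ Finset.range (m+2), (-((l:ℝ) + 2) + ↑x)) = pochh (-(l:ℝ)-2) (m+2) from
          Finset.prod_congr rfl (fun x _ => by ring),
        show (∏ x ∈ Finset.range (m+2), ((l:ℝ) + 2 + 3 + ↑x)) = pochh ((l:ℝ)+5) (m+2) from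
          Finset.prod_congr rfl (fun x _ => by ring),
        show (∏ x ∈ Finset.range (m+2), (-((l:ℝ) + 1) + ↑x)) = pochh (-(l:ℝ)-1) (m+2) from
          Finset.prod_congr rfl (fun x _ => by ring),
        show (∏ x ∈ Finset.range (m+2), ((l:ℝ) + 1 + 3 + ↑x)) = pochh ((l:ℝ)+4) (m+2) from
          Finset.prod_congr rfl (fun x _ => by ring),
        show (∏ x ∈ Finset.range (m+1), (-((l:ℝ) + 1) + ↑x)) = pochh (-(l:ℝ)-1) (m+1) from
          Finset.prod_congr rfl (fun x _ => by ring),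
        show (∏ x ∈ Finset.range (m+1), ((l:ℝ) + 1 + 3 + ↑x)) = pochh ((l:ℝ)+4) (m+1) from
          Finset.prod_congr rfl (fun x _ => by ring),
        show (∏ s ∈ Finset.range (m+2), (-(l:ℝ) + ↑s)) = pochh (-(l:ℝ)) (m+2) from
          Finset.prod_congr rfl (fun x _ => by ring),
        show (∏ s ∈ Finset.range (m+2), ((l:ℝ) + 3 + ↑s)) = pochh ((l:ℝ)+3) (m+2) from
          Finset.prod_congr rfl (fun x _ => by ring),
        show (∏ s ∈ Finset.range (m+2), ((2:ℝ) + ↑s)) = pochh 2 (m+2) from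
          Finset.prod_congr rfl (fun x _ => by ring),
        show (∏ s ∈ Finset.range (m+1), ((2:ℝ) + ↑s)) = pochh 2 (m+1) from
          Finset.prod_congr rfl (fun x _ => by ring)]
    rw [pochP2 (-(l:ℝ)-2), pochS2 ((l:ℝ)+5), pochP1' (-(l:ℝ)-1), pochP1' ((l:ℝ)+4),
        pochP1 (-(l:ℝ)-1), pochP1 ((l:ℝ)+4), pochS2 (-(l:ℝ)), pochP2 ((l:ℝ)+3),
        pochS2 2, pochS1 2]
    rw [show -(l:ℝ)-2+2 = -(l:ℝ) from by ring, show -(l:ℝ)-1+1 = -(l:ℝ) from by ring,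
        show (l:ℝ)+4+1 = (l:ℝ)+5 from by ring, show (l:ℝ)+3+2 = (l:ℝ)+5 from by ring]
    rw [pochS1 (-(l:ℝ)), pochS1 ((l:ℝ)+5)]
    have hW : (0:ℝ) < pochh 2 m := pochh_pos m
    have hF : ((Nat.factorial m : ℕ):ℝ) ≠ 0 := by positivity
    simp only [Nat.factorial_succ]
    push_cast
    have h1 : ((m:ℝ)+1) ≠ 0 := by positivity
    have h2 : ((m:ℝ)+2) ≠ 0 := by positivity
    have h3 : (2+(m:ℝ)) ≠ 0 := by positivity
    have h4 : (2+(m:ℝ)+1) ≠ 0 := by positivity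
    field_simp
    ring

noncomputable def Hfull (l : ℕ) (t : ℝ) : ℝ :=
  ((l:ℝ)+1)*((l:ℝ)+2)/2 * ∑ j ∈ Finset.range (l+1), Acoef l j * t^j

lemma Acoef_eq_zero {l j : ℕ} (h : l < j) : Acoef l j = 0 := by
  unfold Acoef
  rw [Finset.prod_eq_zero (Finset.mem_range.mpr h) (by simp)]
  simp

lemma Hsum_ext (l N : ℕ) (h : l < N) (t : ℝ) :
    ∑ j ∈ Finset.range N, Acoef l j * t^j = ∑ j ∈ Finset.range (l+1), Acoef l j * t^j := by
  refine (Finset.sum_subset (by intro x hx; simp at hx ⊢; omega) ?_).symm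
  intro j _ hj
  simp only [Finset.mem_range, not_lt] at hj
  rw [Acoef_eq_zero (by omega), zero_mul]

lemma Hrec (l : ℕ) (t : ℝ) :
    ((l:ℝ)+2) * Hfull (l+2) t
      = (2*(l:ℝ)+5)*(1-2*t) * Hfull (l+1) t - ((l:ℝ)+3) * Hfull l t := by
  have E2 : Hfull (l+2) t
      = (((l:ℝ)+3)*((l:ℝ)+4)/2) * ∑ j ∈ Finset.range (l+3), Acoef (l+2) j * t^j := by
    unfold Hfull; push_cast; ring_nf; simp only [mul_comm]
  have E1 : Hfull (l+1) t
      = (((l:ℝ)+2)*((l:ℝ)+3)/2) * ∑ j ∈ Finset.range (l+3), Acoef (l+1) j * t^j := by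
    unfold Hfull; rw [Hsum_ext (l+1) (l+3) (by omega)]; push_cast; ring_nf; simp only [mul_comm]
  have E0 : Hfull l t
      = (((l:ℝ)+1)*((l:ℝ)+2)/2) * ∑ j ∈ Finset.range (l+3), Acoef l j * t^j := by
    unfold Hfull; rw [Hsum_ext l (l+3) (by omega)]
  set S2 := ∑ j ∈ Finset.range (l+3), Acoef (l+2) j * t^j with hS2
  set S1 := ∑ j ∈ Finset.range (l+3), Acoef (l+1) j * t^j with hS1
  set S0 := ∑ j ∈ Finset.range (l+3), Acoef l j * t^j with hS0
  set T1 := ∑ j ∈ Finset.range (l+3), Acoef (l+1) j * t^(j+1) with hT1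
  set G := ∑ j ∈ Finset.range (l+3), (if 1 ≤ j then Acoef (l+1) (j-1) else 0) * t^j with hG1
  have hT : (1-2*t) * S1 = S1 - 2*T1 := by
    rw [hS1, hT1, Finset.mul_sum, Finset.mul_sum, ← Finset.sum_sub_distrib]
    exact Finset.sum_congr rfl fun j _ => by ring
  have hG : T1 = G := by
    rw [hT1, hG1]
    rw [Finset.sum_range_succ, Acoef_eq_zero (show l+1 < l+2 by omega)]
    conv_rhs => rw [Finset.sum_range_succ']
    simp only [zero_mul, add_zero, Nat.succ_sub_one, if_pos (Nat.succ_le_succ (Nat.zero_le _)),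
      if_neg (by omega : ¬ (1:ℕ) ≤ 0)]
  have main : ((l:ℝ)+2)*(((l:ℝ)+3)*((l:ℝ)+4)/2)*S2
      - (2*(l:ℝ)+5)*(((l:ℝ)+2)*((l:ℝ)+3)/2)*S1
      + 2*(2*(l:ℝ)+5)*(((l:ℝ)+2)*((l:ℝ)+3)/2)*G
      + ((l:ℝ)+3)*(((l:ℝ)+1)*((l:ℝ)+2)/2)*S0 = 0 := by
    rw [hS2, hS1, hS0, hG1]
    rw [Finset.mul_sum, Finset.mul_sum, Finset.mul_sum, Finset.mul_sum,
      ← Finset.sum_sub_distrib, ← Finset.sum_add_distrib, ← Finset.sum_add_distrib]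
    refine Finset.sum_eq_zero fun j _ => ?_
    have h := coeffH l j
    linear_combination (t^j) * h
  rw [E2, E1, E0]
  linear_combination main - (2*(l:ℝ)+5)*(((l:ℝ)+2)*((l:ℝ)+3)/2)*hT
    + 2*(2*(l:ℝ)+5)*(((l:ℝ)+2)*((l:ℝ)+3)/2)*hG

noncomputable def P32 (m : ℕ) : ℝ := ∏ t ∈ Finset.range m, ((3:ℝ)/2 + t)

lemma P32succ (m : ℕ) : P32 (m+1) = P32 m * (3/2 + m) := Finset.prod_range_succ _ _

noncomputable def gterm (l k : ℕ) (z : ℝ) : ℝ :=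
  (-1 : ℝ)^k * P32 (l-k) / ((Nat.factorial k : ℝ) * (Nat.factorial (l - 2*k) : ℝ)) * (2*z)^(l - 2*k)

lemma gsum (l : ℕ) (z : ℝ) : gegenbauer32 l z = ∑ k ∈ Finset.range (l/2+1), gterm l k z := rfl

lemma ev_k0 (m : ℕ) (z : ℝ) :
    (2*(m:ℝ)+2) * gterm (2*m+2) 0 z - (4*(m:ℝ)+5) * z * gterm (2*m+1) 0 z = 0 := by
  simp only [gterm, pow_zero, Nat.sub_zero, Nat.factorial_zero]
  norm_num
  rw [show 2*m+2 = (2*m+1)+1 from rfl, P32succ, Nat.factorial_succ, pow_succ]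
  have h1 : ((Nat.factorial (2*m+1) : ℕ):ℝ) ≠ 0 := by positivity
  push_cast
  field_simp
  ring

lemma ev_top (m : ℕ) (z : ℝ) :
    (2*(m:ℝ)+2) * gterm (2*m+2) (m+1) z + (2*(m:ℝ)+3) * gterm (2*m) m z = 0 := by
  simp only [gterm]
  rw [show 2*m+2-(m+1) = m+1 from by omega, show 2*m+2-2*(m+1) = 0 from by omega,
    show 2*m-m = m from by omega, show 2*m-2*m = 0 from by omega,
    P32succ, Nat.factorial_succ, pow_succ]
  have h1 : ((Nat.factorial m : ℕ):ℝ) ≠ 0 := by positivity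
  push_cast
  field_simp
  ring

lemma ev_int (a d : ℕ) (z : ℝ) :
    (2*((a:ℝ)+d+1)+2) * gterm (2*(a+d+1)+2) (a+1) z
      - (4*((a:ℝ)+d+1)+5) * z * gterm (2*(a+d+1)+1) (a+1) z
      + (2*((a:ℝ)+d+1)+3) * gterm (2*(a+d+1)) a z = 0 := by
  simp only [gterm]
  rw [show 2*(a+d+1)+2-(a+1) = (a+2*d+2)+1 from by omega,
    show 2*(a+d+1)+2-2*(a+1) = (2*d+1)+1 from by omega,
    show 2*(a+d+1)+1-(a+1) = a+2*d+2 from by omega,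
    show 2*(a+d+1)+1-2*(a+1) = 2*d+1 from by omega,
    show 2*(a+d+1)-a = a+2*d+2 from by omega,
    show 2*(a+d+1)-2*a = (2*d+1)+1 from by omega,
    P32succ, Nat.factorial_succ (2*d+1), Nat.factorial_succ (2*d), Nat.factorial_succ a,
    pow_succ ((-1:ℝ)) a, pow_succ (2*z) (2*d+1)]
  have h1 : ((Nat.factorial a : ℕ):ℝ) ≠ 0 := by positivity
  have h2 : ((Nat.factorial (2*d) : ℕ):ℝ) ≠ 0 := by positivity
  push_cast
  field_simp
  ring

lemma od_k0 (m : ℕ) (z : ℝ) :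
    (2*(m:ℝ)+3) * gterm (2*m+3) 0 z - (4*(m:ℝ)+7) * z * gterm (2*m+2) 0 z = 0 := by
  simp only [gterm, pow_zero, Nat.sub_zero, Nat.factorial_zero]
  norm_num
  rw [show 2*m+3 = (2*m+2)+1 from rfl, P32succ, Nat.factorial_succ, pow_succ]
  have h1 : ((Nat.factorial (2*m+2) : ℕ):ℝ) ≠ 0 := by positivity
  push_cast
  field_simp
  ring

lemma od_int (a d : ℕ) (z : ℝ) :
    (2*((a:ℝ)+d)+3) * gterm (2*(a+d)+3) (a+1) z
      - (4*((a:ℝ)+d)+7) * z * gterm (2*(a+d)+2) (a+1) z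
      + (2*((a:ℝ)+d)+4) * gterm (2*(a+d)+1) a z = 0 := by
  simp only [gterm]
  rw [show 2*(a+d)+3-(a+1) = (a+2*d+1)+1 from by omega,
    show 2*(a+d)+3-2*(a+1) = 2*d+1 from by omega,
    show 2*(a+d)+2-(a+1) = a+2*d+1 from by omega,
    show 2*(a+d)+2-2*(a+1) = 2*d from by omega,
    show 2*(a+d)+1-a = a+2*d+1 from by omega,
    show 2*(a+d)+1-2*a = 2*d+1 from by omega,
    P32succ, Nat.factorial_succ (2*d), Nat.factorial_succ a,
    pow_succ ((-1:ℝ)) a, pow_succ (2*z) (2*d)]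
  have h1 : ((Nat.factorial a : ℕ):ℝ) ≠ 0 := by positivity
  have h2 : ((Nat.factorial (2*d) : ℕ):ℝ) ≠ 0 := by positivity
  push_cast
  field_simp
  ring

lemma pad (F : ℕ → ℝ) (N : ℕ) :
    ∑ k ∈ Finset.range N, F k = ∑ k ∈ Finset.range (N+1), (if k < N then F k else 0) := by
  rw [Finset.sum_range_succ, if_neg (lt_irrefl N), add_zero]
  exact Finset.sum_congr rfl fun k hk => (if_pos (Finset.mem_range.mp hk)).symm

lemma shift (F : ℕ → ℝ) (N : ℕ) :
    ∑ k ∈ Finset.range N, F k = ∑ k ∈ Finset.range (N+1), (if 1 ≤ k then F (k-1) else 0) := by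
  rw [Finset.sum_range_succ']
  simp

lemma Grec (l : ℕ) (z : ℝ) :
    ((l:ℝ)+2) * gegenbauer32 (l+2) z
      = (2*(l:ℝ)+5) * z * gegenbauer32 (l+1) z - ((l:ℝ)+3) * gegenbauer32 l z := by
  obtain ⟨m, rfl | rfl⟩ := Nat.even_or_odd' l
  · -- l = 2m
    rw [gsum, gsum, gsum,
      show (2*m+2)/2+1 = m+2 from by omega, show (2*m+1)/2+1 = m+1 from by omega,
      show (2*m)/2+1 = m+1 from by omega,
      pad (fun k => gterm (2*m+1) k z) (m+1), shift (fun k => gterm (2*m) k z) (m+1),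
      Finset.mul_sum, Finset.mul_sum, Finset.mul_sum, ← Finset.sum_sub_distrib]
    refine Finset.sum_congr rfl fun k hk => ?_
    rw [Finset.mem_range] at hk
    push_cast
    match k with
    | 0 =>
      rw [if_pos (by omega), if_neg (by omega)]
      have h := ev_k0 m z
      push_cast at h ⊢
      linear_combination h
    | (a+1) =>
      rcases lt_or_eq_of_le (by omega : a ≤ m) with ha | ha
      · obtain ⟨d, rfl⟩ : ∃ d, m = a+d+1 := ⟨m-a-1, by omega⟩
        rw [if_pos (by omega), if_pos (by omega)]
        have h := ev_int a d z
        push_cast at h ⊢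
        skip
        linear_combination h
      · subst ha
        rw [if_neg (by omega), if_pos (by omega)]
        have h := ev_top a z
        push_cast at h ⊢
        skip
        linear_combination h
  · -- l = 2m+1
    rw [gsum, gsum, gsum,
      show (2*m+1+2)/2+1 = m+2 from by omega, show (2*m+1+1)/2+1 = m+2 from by omega,
      show (2*m+1)/2+1 = m+1 from by omega,
      shift (fun k => gterm (2*m+1) k z) (m+1),
      Finset.mul_sum, Finset.mul_sum, Finset.mul_sum, ← Finset.sum_sub_distrib]
    refine Finset.sum_congr rfl fun k hk => ?_
    rw [Finset.mem_range] at hk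
    push_cast
    match k with
    | 0 =>
      rw [if_neg (by omega)]
      have h := od_k0 m z
      push_cast at h ⊢
      rw [show 2*m+1+2 = 2*m+3 from by omega, show 2*m+1+1 = 2*m+2 from by omega]
      linear_combination h
    | (a+1) =>
      obtain ⟨d, rfl⟩ : ∃ d, m = a+d := ⟨m-a, by omega⟩
      rw [if_pos (by omega)]
      have h := od_int a d z
      push_cast at h ⊢
      skip
      rw [show 2*(a+d)+1+2 = 2*(a+d)+3 from by omega, show 2*(a+d)+1+1 = 2*(a+d)+2 from by omega]
      linear_combination h

lemma gegen_eq : ∀ l z, gegenbauer32 l z = Hfull l ((1-z)/2) := by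
  intro l
  induction l using Nat.strong_induction_on with
  | _ l ih =>
    rcases l with _|_|n
    · intro z
      simp [gegenbauer32, Hfull, Acoef]
    · intro z
      simp [gegenbauer32, Hfull, Acoef, Finset.sum_range_succ, Finset.prod_range_succ,
        Nat.factorial]
      ring
    · intro z
      have h0 := ih n (by omega) z
      have h1 := ih (n+1) (by omega) z
      have hg := Grec n z
      have hh := Hrec n ((1-z)/2)
      have hz : 1 - 2*((1-z)/2) = z := by ring
      rw [hz] at hh
      have hne : ((n:ℝ)+2) ≠ 0 := by positivity
      refine mul_left_cancel₀ hne ?_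
      rw [hg, hh, h0, h1]

lemma factprod (a : ℕ) : ∀ b : ℕ, ((Nat.factorial (a+b) : ℕ):ℝ)
    = (Nat.factorial a : ℕ) * ∏ t ∈ Finset.range b, ((a:ℝ)+1+t) := by
  intro b
  induction b with
  | zero => simp
  | succ b ihb =>
    rw [show a+(b+1) = (a+b)+1 from rfl, Nat.factorial_succ, Finset.prod_range_succ]
    push_cast [ihb]
    ring

/-- For `l ≥ 0`, `n ≥ 1`, `i ≥ 0`,
`∫_{−1}^{1} C^{3/2}_l(z)(1+z)^n(1−z)^i dz
  = 2^{n+i} i!(l+1)(l+2)/((n+1)_{i+1}) · ₃F₂(−l, l+3, i+1; 2, i+n+2; 1)`,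
with the terminating hypergeometric sum written out. -/
theorem stmt14 (l n i : ℕ) (hn : 1 ≤ n) :
    (∫ z in (-1:ℝ)..1, gegenbauer32 l z * (1+z)^n * (1-z)^i)
      = 2^(n+i) * (Nat.factorial i : ℝ) * ((l:ℝ)+1) * ((l:ℝ)+2) /
          (∏ t ∈ Finset.range (i+1), ((n:ℝ)+1+t)) *
        ∑ j ∈ Finset.range (l+1),
          (∏ t ∈ Finset.range j, (-(l:ℝ)+t)) * (∏ t ∈ Finset.range j, ((l:ℝ)+3+t)) *
              (∏ t ∈ Finset.range j, ((i:ℝ)+1+t)) /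
            ((∏ t ∈ Finset.range j, ((2:ℝ)+t)) *
              (∏ t ∈ Finset.range j, ((i:ℝ)+(n:ℝ)+2+t)) * (Nat.factorial j : ℝ)) := by
  have key : ∀ z : ℝ, gegenbauer32 l z * (1+z)^n * (1-z)^i
      = ∑ j ∈ Finset.range (l+1),
          (((l:ℝ)+1)*((l:ℝ)+2)/2 * Acoef l j * (1/2)^j) * ((1+z)^n * (1-z)^(i+j)) := by
    intro z
    rw [gegen_eq l z]
    unfold Hfull
    rw [Finset.mul_sum, Finset.sum_mul, Finset.sum_mul]
    refine Finset.sum_congr rfl fun j _ => ?_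
    rw [div_pow, pow_add]
    simp only [one_div, inv_pow]
    ring
  have hint : (∫ z in (-1:ℝ)..1, gegenbauer32 l z * (1+z)^n * (1-z)^i)
      = ∑ j ∈ Finset.range (l+1),
          (((l:ℝ)+1)*((l:ℝ)+2)/2 * Acoef l j * (1/2)^j)
            * ∫ z in (-1:ℝ)..1, ((1+z)^n * (1-z)^(i+j)) := by
    simp only [key]
    rw [intervalIntegral.integral_finset_sum]
    · exact Finset.sum_congr rfl fun j _ => intervalIntegral.integral_const_mul _ _
    · intro j _
      apply Continuous.intervalIntegrable
      fun_prop
  rw [hint]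
  rw [Finset.mul_sum]
  refine Finset.sum_congr rfl fun j _ => ?_
  rw [beta_int (i+j) n]
  unfold Acoef
  have e1 : ((Nat.factorial (i+j) : ℕ):ℝ)
      = (Nat.factorial i : ℕ) * ∏ t ∈ Finset.range j, ((i:ℝ)+1+t) := factprod i j
  have e2 : ((Nat.factorial (n+(i+j)+1) : ℕ):ℝ)
      = (Nat.factorial n : ℕ) * ∏ t ∈ Finset.range (i+1+j), ((n:ℝ)+1+t) := by
    rw [show n+(i+j)+1 = n+(i+1+j) from by omega]
    exact factprod n (i+1+j)
  have e3 : (∏ t ∈ Finset.range (i+1+j), ((n:ℝ)+1+t))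
      = (∏ t ∈ Finset.range (i+1), ((n:ℝ)+1+t)) * ∏ t ∈ Finset.range j, ((i:ℝ)+(n:ℝ)+2+t) := by
    rw [Finset.prod_range_add]
    congr 1
    exact Finset.prod_congr rfl fun t _ => by push_cast; ring
  rw [e1, e2, e3]
  have h1 : (0:ℝ) < ∏ t ∈ Finset.range (i+1), ((n:ℝ)+1+t) :=
    Finset.prod_pos fun t _ => by positivity
  have h2 : (0:ℝ) < ∏ t ∈ Finset.range j, ((i:ℝ)+(n:ℝ)+2+t) :=
    Finset.prod_pos fun t _ => by positivity
  have h3 : (0:ℝ) < ∏ t ∈ Finset.range j, ((2:ℝ)+t) :=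
    Finset.prod_pos fun t _ => by positivity
  have h4 : ((Nat.factorial j : ℕ):ℝ) ≠ 0 := by positivity
  have h5 : ((Nat.factorial n : ℕ):ℝ) ≠ 0 := by positivity
  have h6 : ((Nat.factorial i : ℕ):ℝ) ≠ 0 := by positivity
  simp only [one_div, inv_pow]
  field_simp
  ring
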